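/- Let B → K and C → K be ring homomorphisms with C → K surjective, A = B ×_K C. If M is an A-module such that M ⊗_A B is a flat B-module, M ⊗_A C is a flat C-module, and the natural map M → (M ⊗_A B) ×_{M ⊗_A K} (M ⊗_A C) is an isomorphism, and moreover M ⊗_A B is finitely generated over B and M ⊗_A C is finitely generated over C, then M is a finitely generated A-module. -/

import Mathlib

open TensorProduct

private lemma ferrand_aux_exists_finset_span (A B M : Type*) [CommRing A] [CommRing B]
    [Algebra A B] [AddCommGroup M] [Module A M] [Module.Finite B (B ⊗[A] M)] :
    ∃ s : Finset M,
      Submodule.span B ((fun m : M => (1 : B) ⊗ₜ[A] m) '' ↑s) = ⊤ := by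
  classical
  obtain ⟨t, ht⟩ := Module.Finite.fg_top (R := B) (M := B ⊗[A] M)
  have hall : ∀ g : B ⊗[A] M, ∃ sg : Finset M,
      g ∈ Submodule.span B ((fun m : M => (1 : B) ⊗ₜ[A] m) '' ↑sg) := by
    intro g
    induction g using TensorProduct.induction_on with
    | zero => exact ⟨∅, Submodule.zero_mem _⟩
    | tmul b m =>
        refine ⟨{m}, ?_⟩
        have h1 : b ⊗ₜ[A] m = b • ((1 : B) ⊗ₜ[A] m) := by
          rw [TensorProduct.smul_tmul', smul_eq_mul, mul_one]
        rw [h1]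
        exact Submodule.smul_mem _ _ (Submodule.subset_span ⟨m, by simp, rfl⟩)
    | add u v hu hv =>
        obtain ⟨su, hsu⟩ := hu
        obtain ⟨sv, hsv⟩ := hv
        refine ⟨su ∪ sv, Submodule.add_mem _ ?_ ?_⟩
        · exact Submodule.span_mono
            (Set.image_mono (by intro m hm; simp_all)) hsu
        · exact Submodule.span_mono
            (Set.image_mono (by intro m hm; simp_all)) hsv
  choose sg hsg using hall
  refine ⟨t.biUnion sg, ?_⟩
  rw [eq_top_iff, ← ht]
  refine Submodule.span_le.2 fun g hg => ?_
  refine Submodule.span_mono (Set.image_mono ?_) (hsg g)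
  intro m hm
  exact Finset.mem_coe.2 (Finset.mem_biUnion.2 ⟨g, hg, Finset.mem_coe.1 hm⟩)

private lemma ferrand_aux_kernel (A C K M : Type*) [CommRing A] [CommRing C] [CommRing K]
    [Algebra A C] [Algebra A K] [Algebra C K] [IsScalarTower A C K]
    [AddCommGroup M] [Module A M]
    (hsurj : Function.Surjective (algebraMap C K))
    {ι : Type*} [Fintype ι] (m : ι → M)
    (hgen : Submodule.span C (Set.range fun i => (1 : C) ⊗ₜ[A] m i) = ⊤)
    (z : C ⊗[A] M)
    (hz : LinearMap.rTensor M (IsScalarTower.toAlgHom A C K).toLinearMap z = 0) :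
    ∃ f : ι → C, (∀ i, algebraMap C K (f i) = 0) ∧ ∑ i, f i ⊗ₜ[A] m i = z := by
  classical
  set γL := (IsScalarTower.toAlgHom A C K).toLinearMap with hγL
  set I : Submodule A C := Submodule.restrictScalars A
    (RingHom.ker (algebraMap C K)) with hI
  have hγapp : ∀ c : C, γL c = algebraMap C K c := fun c => rfl
  have hex : Function.Exact I.subtype γL := by
    intro c
    constructor
    · intro h
      refine ⟨⟨c, ?_⟩, rfl⟩
      simpa [hI, RingHom.mem_ker, ← hγapp] using h
    · rintro ⟨⟨c', hc'⟩, rfl⟩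
      simpa [hγapp, hI, Submodule.restrictScalars_mem, RingHom.mem_ker] using hc'
  have hgsurj : Function.Surjective γL := hsurj
  have hexT := rTensor_exact (R := A) M hex hgsurj
  obtain ⟨w, hw⟩ := (hexT z).mp hz
  suffices h : ∀ w : I ⊗[A] M, ∃ f : ι → C,
      (∀ i, algebraMap C K (f i) = 0) ∧
      ∑ i, f i ⊗ₜ[A] m i = LinearMap.rTensor M I.subtype w by
    obtain ⟨f, hf0, hfe⟩ := h w
    exact ⟨f, hf0, by rw [hfe, hw]⟩
  intro w
  induction w using TensorProduct.induction_on with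
  | zero => exact ⟨0, fun i => map_zero _, by simp⟩
  | tmul c μ =>
      have hμ : (1 : C) ⊗ₜ[A] μ ∈
          Submodule.span C (Set.range fun i => (1 : C) ⊗ₜ[A] m i) := by
        rw [hgen]; trivial
      obtain ⟨e, he⟩ := (Submodule.mem_span_range_iff_exists_fun C).1 hμ
      refine ⟨fun i => (c : C) * e i, fun i => ?_, ?_⟩
      · have hc0 : algebraMap C K (c : C) = 0 := by
          simpa only [hI, Submodule.restrictScalars_mem, RingHom.mem_ker] using c.2
        rw [map_mul, hc0, zero_mul]
      · have h1 : ∀ i, ((c : C) * e i) ⊗ₜ[A] m i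
            = (c : C) • (e i • ((1 : C) ⊗ₜ[A] m i)) := by
          intro i
          rw [smul_smul, TensorProduct.smul_tmul', smul_eq_mul, mul_one]
        rw [Finset.sum_congr rfl fun i _ => h1 i, ← Finset.smul_sum, he]
        simp [TensorProduct.smul_tmul', smul_eq_mul, mul_one]
  | add u v hu hv =>
      obtain ⟨fu, hfu0, hfue⟩ := hu
      obtain ⟨fv, hfv0, hfve⟩ := hv
      refine ⟨fu + fv, fun i => by simp [hfu0 i, hfv0 i], ?_⟩
      rw [map_add, ← hfue, ← hfve, ← Finset.sum_add_distrib]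
      exact Finset.sum_congr rfl fun i _ => (TensorProduct.add_tmul _ _ _)

/-- Descent of finite generation for glued flat modules through a Ferrand
fiber product: if `B ⊗_A M` and `C ⊗_A M` are flat and finitely generated and
`M → (B ⊗_A M) ×_{K ⊗_A M} (C ⊗_A M)` is an isomorphism, then `M` is a
finitely generated `A`-module. -/
theorem ferrand_glued_flat_module_finite
    (A B C K : Type*) [CommRing A] [CommRing B] [CommRing C] [CommRing K]
    [Algebra A B] [Algebra A C] [Algebra A K] [Algebra B K] [Algebra C K]
    [IsScalarTower A B K] [IsScalarTower A C K]
    (hsurj : Function.Surjective (algebraMap C K))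
    (hpull : ∀ (b : B) (c : C), algebraMap B K b = algebraMap C K c →
      ∃! a : A, algebraMap A B a = b ∧ algebraMap A C a = c)
    (M : Type*) [AddCommGroup M] [Module A M]
    (hBflat : Module.Flat B (B ⊗[A] M)) (hBfin : Module.Finite B (B ⊗[A] M))
    (hCflat : Module.Flat C (C ⊗[A] M)) (hCfin : Module.Finite C (C ⊗[A] M))
    (hiso : ∀ (x : B ⊗[A] M) (y : C ⊗[A] M),
      LinearMap.rTensor M (IsScalarTower.toAlgHom A B K).toLinearMap x =
        LinearMap.rTensor M (IsScalarTower.toAlgHom A C K).toLinearMap y →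
      ∃! m : M, (1 : B) ⊗ₜ[A] m = x ∧ (1 : C) ⊗ₜ[A] m = y) :
    Module.Finite A M := by
  classical
  obtain ⟨sB, hsB⟩ := ferrand_aux_exists_finset_span A B M
  obtain ⟨sC, hsC⟩ := ferrand_aux_exists_finset_span A C M
  set s : Finset M := sB ∪ sC with hs
  set mv : (↥(↑s : Set M)) → M := fun i => (i : M) with hmv
  have hsubB : (↑sB : Set M) ⊆ ↑s := by intro m hm; simp [hs]; exact Or.inl hm
  have hsubC : (↑sC : Set M) ⊆ ↑s := by intro m hm; simp [hs]; exact Or.inr hm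
  have hrangeB : Submodule.span B (Set.range fun i : (↥(↑s : Set M)) =>
      (1 : B) ⊗ₜ[A] mv i) = ⊤ := by
    rw [eq_top_iff, ← hsB]
    refine Submodule.span_mono ?_
    rw [← Set.image_eq_range (fun m : M => (1 : B) ⊗ₜ[A] m) (↑s : Set M)]
    exact Set.image_mono hsubB
  have hrangeC : Submodule.span C (Set.range fun i : (↥(↑s : Set M)) =>
      (1 : C) ⊗ₜ[A] mv i) = ⊤ := by
    rw [eq_top_iff, ← hsC]
    refine Submodule.span_mono ?_
    rw [← Set.image_eq_range (fun m : M => (1 : C) ⊗ₜ[A] m) (↑s : Set M)]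
    exact Set.image_mono hsubC
  refine ⟨⟨s, ?_⟩⟩
  rw [Submodule.eq_top_iff']
  intro x
  -- coefficients over B
  have hxB : (1 : B) ⊗ₜ[A] x ∈ Submodule.span B
      (Set.range fun i : (↥(↑s : Set M)) => (1 : B) ⊗ₜ[A] mv i) := by
    rw [hrangeB]; trivial
  obtain ⟨b, hb⟩ := (Submodule.mem_span_range_iff_exists_fun B).1 hxB
  have hb' : ∑ i, b i ⊗ₜ[A] mv i = (1 : B) ⊗ₜ[A] x := by
    rw [← hb]
    exact Finset.sum_congr rfl fun i _ => by
      rw [TensorProduct.smul_tmul', smul_eq_mul, mul_one]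
  -- coefficients over C
  have hxC : (1 : C) ⊗ₜ[A] x ∈ Submodule.span C
      (Set.range fun i : (↥(↑s : Set M)) => (1 : C) ⊗ₜ[A] mv i) := by
    rw [hrangeC]; trivial
  obtain ⟨c, hc⟩ := (Submodule.mem_span_range_iff_exists_fun C).1 hxC
  have hc' : ∑ i, c i ⊗ₜ[A] mv i = (1 : C) ⊗ₜ[A] x := by
    rw [← hc]
    exact Finset.sum_congr rfl fun i _ => by
      rw [TensorProduct.smul_tmul', smul_eq_mul, mul_one]
  -- lift the B-coefficients through C → K
  have hlift : ∀ i, ∃ c' : C, algebraMap C K c' = algebraMap B K (b i) :=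
    fun i => hsurj _
  choose c' hc'lift using hlift
  -- the difference is in the kernel
  set z : C ⊗[A] M := ∑ i, (c' i - c i) ⊗ₜ[A] mv i with hz
  have hzker : LinearMap.rTensor M (IsScalarTower.toAlgHom A C K).toLinearMap z = 0 := by
    have h1 : LinearMap.rTensor M (IsScalarTower.toAlgHom A C K).toLinearMap z
        = ∑ i, (algebraMap B K (b i) - algebraMap C K (c i)) ⊗ₜ[A] mv i := by
      rw [hz, map_sum]
      exact Finset.sum_congr rfl fun i _ => by
        rw [LinearMap.rTensor_tmul]
        simp [map_sub, hc'lift i]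
    have h2 : (∑ i, (algebraMap B K (b i)) ⊗ₜ[A] mv i : K ⊗[A] M)
        = ∑ i, (algebraMap C K (c i)) ⊗ₜ[A] mv i := by
      have hB0 : LinearMap.rTensor M (IsScalarTower.toAlgHom A B K).toLinearMap
          ((1 : B) ⊗ₜ[A] x) = (1 : K) ⊗ₜ[A] x := by
        rw [LinearMap.rTensor_tmul]; simp
      have hC0 : LinearMap.rTensor M (IsScalarTower.toAlgHom A C K).toLinearMap
          ((1 : C) ⊗ₜ[A] x) = (1 : K) ⊗ₜ[A] x := by
        rw [LinearMap.rTensor_tmul]; simp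
      calc ∑ i, (algebraMap B K (b i)) ⊗ₜ[A] mv i
          = LinearMap.rTensor M (IsScalarTower.toAlgHom A B K).toLinearMap
              (∑ i, b i ⊗ₜ[A] mv i) := by
            rw [map_sum]
            exact Finset.sum_congr rfl fun i _ => by rw [LinearMap.rTensor_tmul]; rfl
        _ = (1 : K) ⊗ₜ[A] x := by rw [hb', hB0]
        _ = LinearMap.rTensor M (IsScalarTower.toAlgHom A C K).toLinearMap
              (∑ i, c i ⊗ₜ[A] mv i) := by rw [hc', hC0]
        _ = ∑ i, (algebraMap C K (c i)) ⊗ₜ[A] mv i := by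
            rw [map_sum]
            exact Finset.sum_congr rfl fun i _ => by rw [LinearMap.rTensor_tmul]; rfl
    rw [h1]
    rw [Finset.sum_congr rfl fun i (_ : i ∈ Finset.univ) =>
      (TensorProduct.sub_tmul (algebraMap B K (b i)) (algebraMap C K (c i)) (mv i))]
    rw [Finset.sum_sub_distrib, h2, sub_self]
  obtain ⟨f, hf0, hfz⟩ := ferrand_aux_kernel A C K M hsurj mv hrangeC z hzker
  -- corrected C-coefficients
  set c'' : (↥(↑s : Set M)) → C := fun i => c' i - f i with hc''
  have hcomp : ∀ i, algebraMap B K (b i) = algebraMap C K (c'' i) := by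
    intro i
    rw [hc'']
    simp [map_sub, hf0 i, hc'lift i]
  have hzeq : z = (∑ i, c' i ⊗ₜ[A] mv i) - ∑ i, c i ⊗ₜ[A] mv i := by
    rw [hz, ← Finset.sum_sub_distrib]
    exact Finset.sum_congr rfl fun i _ => TensorProduct.sub_tmul _ _ _
  have hc''sum : ∑ i, c'' i ⊗ₜ[A] mv i = (1 : C) ⊗ₜ[A] x := by
    have h3 : ∑ i, c'' i ⊗ₜ[A] mv i = (∑ i, c' i ⊗ₜ[A] mv i) - z := by
      rw [← hfz, ← Finset.sum_sub_distrib]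
      exact Finset.sum_congr rfl fun i _ => TensorProduct.sub_tmul _ _ _
    rw [h3, hzeq, sub_sub_cancel, hc']
  choose a ha using fun i => (hpull (b i) (c'' i) (hcomp i)).exists
  set x' : M := ∑ i, a i • mv i with hx'
  have hBx' : (1 : B) ⊗ₜ[A] x' = (1 : B) ⊗ₜ[A] x := by
    rw [hx', TensorProduct.tmul_sum, ← hb']
    exact Finset.sum_congr rfl fun i _ => by
      rw [TensorProduct.tmul_smul, TensorProduct.smul_tmul',
        ← Algebra.algebraMap_eq_smul_one, (ha i).1]
  have hCx' : (1 : C) ⊗ₜ[A] x' = (1 : C) ⊗ₜ[A] x := by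
    rw [hx', TensorProduct.tmul_sum, ← hc''sum]
    exact Finset.sum_congr rfl fun i _ => by
      rw [TensorProduct.tmul_smul, TensorProduct.smul_tmul',
        ← Algebra.algebraMap_eq_smul_one, (ha i).2]
  have heq : LinearMap.rTensor M (IsScalarTower.toAlgHom A B K).toLinearMap
      ((1 : B) ⊗ₜ[A] x)
      = LinearMap.rTensor M (IsScalarTower.toAlgHom A C K).toLinearMap
      ((1 : C) ⊗ₜ[A] x) := by
    rw [LinearMap.rTensor_tmul, LinearMap.rTensor_tmul]
    simp
  obtain ⟨m0, _, huniq⟩ := hiso ((1 : B) ⊗ₜ[A] x) ((1 : C) ⊗ₜ[A] x) heq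
  have hx1 : x = m0 := huniq x ⟨rfl, rfl⟩
  have hx2 : x' = m0 := huniq x' ⟨hBx', hCx'⟩
  rw [hx1.trans hx2.symm, hx']
  exact Submodule.sum_mem _ fun i _ => Submodule.smul_mem _ _ (Submodule.subset_span i.2)
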